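/- Let x_1, …, x_n (n > 1) be variables and let S_1, …, S_m (m > 3) be 3-element subsets of the variables such that each variable belongs to exactly three of the S_i. Fix a linear order ≺ on the variables and let A = {x_1, …, x_n}. Let D_1 be the district with candidate set C_1 = {s_1, …, s_m} (fresh candidates) and, for each i ∈ {1,…,m}, one vote whose top four candidates are the three members of S_i in ≺-increasing order followed by s_i, and three votes whose top candidate is s_i (remaining candidates below, arbitrary). Let D_2 be the district with candidate set C_2 = {t_1, …, t_m} (fresh candidates) and, for each i, one vote whose top four candidates are S_i in ≺-increasing order followed by t_i, one vote whose top four are S_i in ≺-decreasing order followed by t_i, and three votes whose top candidate is t_i. Then there exists X ⊆ A with |X ∩ S_i| = 1 for every i ∈ {1,…,m} if and only if there exists an assignment g : A → {1, 2} such that every a ∈ A is a 1-approval winner of the election (C_{g(a)} ∪ g⁻¹(g(a)), V_{g(a)}); i.e., if and only if (A, D_1, D_2) is a Yes-instance of 1-approval unbounded constructive recampaigning. -/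

import Mathlib

open Finset
open scoped Classical

noncomputable section

variable {Cand : Type*}

/-- `t`-approval score of `c` in the election `(F, V)`, where each vote is a linear order on
the candidate type: the number of votes in which fewer than `t` candidates of `F` are ranked
above `c`. -/
def approvalScore [DecidableEq Cand] (t : ℕ) (F : Finset Cand)
    (V : List (LinearOrder Cand)) (c : Cand) : ℕ :=
  (V.map fun v => if (F.filter fun b => v.lt b c).card < t then 1 else 0).sum

/-- `t`-approval winner set of the election `(F, V)`: the candidates of `F` with maximum
`t`-approval score. -/
def approvalWinners [DecidableEq Cand] (t : ℕ) (F : Finset Cand)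
    (V : List (LinearOrder Cand)) : Finset Cand :=
  F.filter fun c => ∀ b ∈ F, approvalScore t F V b ≤ approvalScore t F V c

/-- `IsTopSegment v F l` says that, within the candidate set `F`, the vote `v` ranks the
members of the list `l` at the top, in the order in which they are listed (all remaining
candidates of `F` are ranked below all of `l`, in arbitrary order). -/
def IsTopSegment (v : LinearOrder Cand) (F : Finset Cand) (l : List Cand) : Prop :=
  (∀ c ∈ l, c ∈ F) ∧ l.Chain' (fun a b => v.lt a b) ∧
    ∀ b ∈ F, b ∉ l → ∀ c ∈ l, v.lt c b

/-- `assignedTo A g i` is the set `A_i` of additional candidates assigned to district `i`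
by the assignment `g : A → {1, …, k}`. -/
def assignedTo [DecidableEq Cand] {k : ℕ} (A : Finset Cand)
    (g : {a // a ∈ A} → Fin k) (i : Fin k) : Finset Cand :=
  (A.attach.filter fun a => g a = i).image Subtype.val

/-- Yes-instance of unbounded constructive recampaigning (`E`-CRC). -/
def YesCRC [DecidableEq Cand] {Prof : Type*} (E : Finset Cand → Prof → Finset Cand) {k : ℕ}
    (C : Fin k → Finset Cand) (V : Fin k → Prof) (A : Finset Cand) : Prop :=
  ∃ g : {a // a ∈ A} → Fin k,
    ∀ a : {a // a ∈ A}, (a : Cand) ∈ E (C (g a) ∪ assignedTo A g (g a)) (V (g a))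

/-! ### Auxiliary lemmas -/

lemma vlt_irrefl (v : LinearOrder Cand) (a : Cand) : ¬ v.lt a a := fun h => by
  rcases (v.lt_iff_le_not_ge a a).1 h with ⟨h1, h2⟩; exact h2 h1

lemma vlt_asymm (v : LinearOrder Cand) {a b : Cand} (h : v.lt a b) : ¬ v.lt b a := fun h' => by
  rcases (v.lt_iff_le_not_ge a b).1 h with ⟨h1, h2⟩
  rcases (v.lt_iff_le_not_ge b a).1 h' with ⟨h1', h2'⟩
  exact h2 h1'

lemma vlt_trans (v : LinearOrder Cand) {a b c : Cand} (h : v.lt a b) (h' : v.lt b c) :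
    v.lt a c := by
  rcases (v.lt_iff_le_not_ge a b).1 h with ⟨h1, h2⟩
  rcases (v.lt_iff_le_not_ge b c).1 h' with ⟨h1', h2'⟩
  refine (v.lt_iff_le_not_ge a c).2 ⟨v.le_trans _ _ _ h1 h1', fun hca => h2 (v.le_trans _ _ _ h1' hca)⟩

lemma vlt_trichotomy (v : LinearOrder Cand) (a b : Cand) : v.lt a b ∨ a = b ∨ v.lt b a := by
  rcases v.le_total a b with h | h
  · by_cases h' : v.le b a
    · exact Or.inr (Or.inl (v.le_antisymm a b h h'))
    · exact Or.inl ((v.lt_iff_le_not_ge a b).2 ⟨h, h'⟩)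
  · by_cases h' : v.le a b
    · exact Or.inr (Or.inl (v.le_antisymm a b h' h))
    · exact Or.inr (Or.inr ((v.lt_iff_le_not_ge b a).2 ⟨h, h'⟩))

lemma vlt_pairwise (v : LinearOrder Cand) {l : List Cand}
    (h : l.Chain' fun a b => v.lt a b) : l.Pairwise fun a b => v.lt a b := by
  haveI : IsTrans Cand (fun a b => v.lt a b) := ⟨fun a b c => vlt_trans v⟩
  exact List.isChain_iff_pairwise.1 h

lemma ite_congr' {P Q : Prop} {dP : Decidable P} {dQ : Decidable Q} (h : P ↔ Q) {a b : ℕ} :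
    (@ite _ P dP a b) = (@ite _ Q dQ a b) := by
  have hPQ : P = Q := propext h
  subst hPQ
  exact congrArg (fun d => @ite ℕ P d a b) (Subsingleton.elim dP dQ)

lemma list_pairwise_mono {R Q : Cand → Cand → Prop} {l : List Cand}
    (hR : l.Pairwise R) (hQ : l.Pairwise Q) (hasymm : ∀ x y, R x y → ¬ R y x) :
    ∀ a ∈ l, ∀ b ∈ l, R a b → Q a b := by
  induction l with
  | nil => simp
  | cons x l ih =>
    rw [List.pairwise_cons] at hR hQ
    intro a ha b hb hab
    rcases List.mem_cons.1 ha with ha' | ha' <;> rcases List.mem_cons.1 hb with hb' | hb'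
    · rw [ha', hb'] at hab; exact absurd hab (hasymm _ _ hab)
    · rw [ha']; rw [ha'] at hab; exact hQ.1 b hb'
    · rw [hb'] at hab; exact absurd (hR.1 a ha') (hasymm _ _ hab)
    · exact ih hR.2 hQ.2 a ha' b hb' hab

lemma tops_iff_of_topSegment {v : LinearOrder Cand} {F F' : Finset Cand} {l : List Cand}
    (h : IsTopSegment v F l) (hF' : F' ⊆ F) {c₀ : Cand}
    (h0l : c₀ ∈ l) (h0F : c₀ ∈ F')
    (hmin : ∀ b ∈ l, b ∈ F' → ¬ v.lt b c₀)
    {c : Cand} (hc : c ∈ F') :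
    (∀ b ∈ F', ¬ v.lt b c) ↔ c = c₀ := by
  constructor
  · intro htop
    by_contra hne
    have h1 : ¬ v.lt c₀ c := htop c₀ h0F
    have h2 : v.lt c c₀ := by
      rcases vlt_trichotomy v c c₀ with h' | h' | h'
      · exact h'
      · exact absurd h' hne
      · exact absurd h' h1
    by_cases hcl : c ∈ l
    · exact hmin c hcl hc h2
    · exact h1 (h.2.2 c (hF' hc) hcl c₀ h0l)
  · rintro rfl
    intro b hb hlt
    by_cases hbl : b ∈ l
    · exact hmin b hbl hb hlt
    · exact vlt_asymm v hlt (h.2.2 b (hF' hb) hbl _ h0l)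

/-- The top candidate put forward by a clause-vote, restricted to assigned set `B`. -/
def clauseTop [LinearOrder Cand] (T B : Finset Cand) (e : Cand) : Cand :=
  if h : (T ∩ B).Nonempty then (T ∩ B).min' h else e

def clauseBot [LinearOrder Cand] (T B : Finset Cand) (e : Cand) : Cand :=
  if h : (T ∩ B).Nonempty then (T ∩ B).max' h else e

lemma clauseTop_mem [LinearOrder Cand] {T B : Finset Cand} (e : Cand)
    (h : (T ∩ B).Nonempty) : clauseTop T B e ∈ T ∩ B := by
  rw [clauseTop, dif_pos h]; exact Finset.min'_mem _ h

lemma clauseBot_mem [LinearOrder Cand] {T B : Finset Cand} (e : Cand)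
    (h : (T ∩ B).Nonempty) : clauseBot T B e ∈ T ∩ B := by
  rw [clauseBot, dif_pos h]; exact Finset.max'_mem _ h

lemma clauseTop_of_empty [LinearOrder Cand] {T B : Finset Cand} (e : Cand)
    (h : ¬ (T ∩ B).Nonempty) : clauseTop T B e = e := dif_neg h

lemma clauseBot_of_empty [LinearOrder Cand] {T B : Finset Cand} (e : Cand)
    (h : ¬ (T ∩ B).Nonempty) : clauseBot T B e = e := dif_neg h

lemma clauseTop_eq_min' [LinearOrder Cand] {T B : Finset Cand} (e : Cand)
    (h : (T ∩ B).Nonempty) : clauseTop T B e = (T ∩ B).min' h := dif_pos h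

lemma clauseBot_eq_max' [LinearOrder Cand] {T B : Finset Cand} (e : Cand)
    (h : (T ∩ B).Nonempty) : clauseBot T B e = (T ∩ B).max' h := dif_pos h

/-- Characterisation of the top of a `w`-type (filler) vote. -/
lemma tops_single {v : LinearOrder Cand} {F F' : Finset Cand} {e c : Cand}
    (hseg : IsTopSegment v F [e]) (hF' : F' ⊆ F) (he : e ∈ F') (hc : c ∈ F') :
    (∀ b ∈ F', ¬ v.lt b c) ↔ c = e := by
  refine tops_iff_of_topSegment hseg hF' (List.mem_singleton_self e) he ?_ hc
  intro b hb _
  rw [List.mem_singleton.1 hb]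
  exact vlt_irrefl v e

/-- Characterisation of the top of a clause-vote listing `T` in increasing order. -/
lemma tops_sorted {v : LinearOrder Cand} [LinearOrder Cand] {Cs A B T : Finset Cand} {e c : Cand}
    (hseg : IsTopSegment v (Cs ∪ A) (T.sort (· ≤ ·) ++ [e]))
    (hBA : B ⊆ A) (hTA : T ⊆ A) (hCsA : ∀ x ∈ Cs, x ∉ A)
    (he : e ∈ Cs) (hc : c ∈ Cs ∪ B) :
    (∀ b ∈ Cs ∪ B, ¬ v.lt b c) ↔ c = clauseTop T B e := by
  have hF' : Cs ∪ B ⊆ Cs ∪ A := Finset.union_subset_union_right hBA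
  have hpair : (T.sort (· ≤ ·) ++ [e]).Pairwise fun a b => v.lt a b := vlt_pairwise v hseg.2.1
  have hmemTB : ∀ b ∈ T.sort (· ≤ ·), b ∈ Cs ∪ B → b ∈ T ∩ B := by
    intro b hb hb'
    have hbT : b ∈ T := (Finset.mem_sort _).1 hb
    rcases Finset.mem_union.1 hb' with h | h
    · exact absurd (hTA hbT) (hCsA b h)
    · exact Finset.mem_inter.2 ⟨hbT, h⟩
  by_cases hne : (T ∩ B).Nonempty
  · rw [clauseTop_eq_min' e hne]
    have hc₀TB := Finset.min'_mem _ hne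
    have hc₀sort : (T ∩ B).min' hne ∈ T.sort (· ≤ ·) :=
      (Finset.mem_sort _).2 (Finset.mem_inter.1 hc₀TB).1
    refine tops_iff_of_topSegment hseg hF' (List.mem_append_left _ hc₀sort)
      (Finset.mem_union_right _ (Finset.mem_inter.1 hc₀TB).2) ?_ hc
    intro b hbl hbF hlt
    rcases List.mem_append.1 hbl with hb | hb
    · have hbTB := hmemTB b hb hbF
      have hle : (T ∩ B).min' hne ≤ b := Finset.min'_le _ _ hbTB
      rcases eq_or_lt_of_le hle with heq | hlt'
      · rw [← heq] at hlt; exact vlt_irrefl v _ hlt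
      · have hp1 : (T.sort (· ≤ ·)).Pairwise (· < ·) := (Finset.sortedLT_sort T).pairwise
        have hp2 : (T.sort (· ≤ ·)).Pairwise fun a b => v.lt a b :=
          (List.pairwise_append.1 hpair).1
        exact vlt_asymm v
          (list_pairwise_mono hp1 hp2 (fun x y h1 h2 => absurd h1 (lt_asymm h2))
            _ hc₀sort b hb hlt') hlt
    · rw [List.mem_singleton.1 hb] at hlt
      exact vlt_asymm v
        ((List.pairwise_append.1 hpair).2.2 _ hc₀sort e (List.mem_singleton_self e)) hlt
  · rw [clauseTop_of_empty e hne]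
    refine tops_iff_of_topSegment hseg hF'
      (List.mem_append_right _ (List.mem_singleton_self e)) (Finset.mem_union_left _ he) ?_ hc
    intro b hbl hbF hlt
    rcases List.mem_append.1 hbl with hb | hb
    · exact hne ⟨b, hmemTB b hb hbF⟩
    · rw [List.mem_singleton.1 hb] at hlt; exact vlt_irrefl v _ hlt

/-- Characterisation of the top of a clause-vote listing `T` in decreasing order. -/
lemma tops_rev {v : LinearOrder Cand} [LinearOrder Cand] {Cs A B T : Finset Cand} {e c : Cand}
    (hseg : IsTopSegment v (Cs ∪ A) ((T.sort (· ≤ ·)).reverse ++ [e]))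
    (hBA : B ⊆ A) (hTA : T ⊆ A) (hCsA : ∀ x ∈ Cs, x ∉ A)
    (he : e ∈ Cs) (hc : c ∈ Cs ∪ B) :
    (∀ b ∈ Cs ∪ B, ¬ v.lt b c) ↔ c = clauseBot T B e := by
  have hF' : Cs ∪ B ⊆ Cs ∪ A := Finset.union_subset_union_right hBA
  have hpair : ((T.sort (· ≤ ·)).reverse ++ [e]).Pairwise fun a b => v.lt a b :=
    vlt_pairwise v hseg.2.1
  have hmemTB : ∀ b ∈ (T.sort (· ≤ ·)).reverse, b ∈ Cs ∪ B → b ∈ T ∩ B := by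
    intro b hb hb'
    have hbT : b ∈ T := (Finset.mem_sort _).1 (List.mem_reverse.1 hb)
    rcases Finset.mem_union.1 hb' with h | h
    · exact absurd (hTA hbT) (hCsA b h)
    · exact Finset.mem_inter.2 ⟨hbT, h⟩
  by_cases hne : (T ∩ B).Nonempty
  · rw [clauseBot_eq_max' e hne]
    have hc₀TB := Finset.max'_mem _ hne
    have hc₀sort : (T ∩ B).max' hne ∈ (T.sort (· ≤ ·)).reverse :=
      List.mem_reverse.2 ((Finset.mem_sort _).2 (Finset.mem_inter.1 hc₀TB).1)
    refine tops_iff_of_topSegment hseg hF' (List.mem_append_left _ hc₀sort)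
      (Finset.mem_union_right _ (Finset.mem_inter.1 hc₀TB).2) ?_ hc
    intro b hbl hbF hlt
    rcases List.mem_append.1 hbl with hb | hb
    · have hbTB := hmemTB b hb hbF
      have hle : b ≤ (T ∩ B).max' hne := Finset.le_max' _ _ hbTB
      rcases eq_or_lt_of_le hle with heq | hlt'
      · rw [heq] at hlt; exact vlt_irrefl v _ hlt
      · have hp1 : ((T.sort (· ≤ ·)).reverse).Pairwise fun a b => b < a :=
          List.pairwise_reverse.2 ((Finset.sortedLT_sort T).pairwise)
        have hp2 : ((T.sort (· ≤ ·)).reverse).Pairwise fun a b => v.lt a b :=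
          (List.pairwise_append.1 hpair).1
        exact vlt_asymm v
          (list_pairwise_mono hp1 hp2 (fun x y h1 h2 => absurd h1 (lt_asymm h2))
            _ hc₀sort b hb hlt') hlt
    · rw [List.mem_singleton.1 hb] at hlt
      exact vlt_asymm v
        ((List.pairwise_append.1 hpair).2.2 _ hc₀sort e (List.mem_singleton_self e)) hlt
  · rw [clauseBot_of_empty e hne]
    refine tops_iff_of_topSegment hseg hF'
      (List.mem_append_right _ (List.mem_singleton_self e)) (Finset.mem_union_left _ he) ?_ hc
    intro b hbl hbF hlt
    rcases List.mem_append.1 hbl with hb | hb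
    · exact hne ⟨b, hmemTB b hb hbF⟩
    · rw [List.mem_singleton.1 hb] at hlt; exact vlt_irrefl v _ hlt

/-! ### Score computations -/

lemma approvalScore_one_nil [DecidableEq Cand] (F : Finset Cand) (c : Cand) :
    approvalScore 1 F [] c = 0 := rfl

lemma approvalScore_one_cons [DecidableEq Cand] (F : Finset Cand) (v : LinearOrder Cand)
    (V : List (LinearOrder Cand)) (c : Cand) :
    approvalScore 1 F (v :: V) c
      = (if (∀ b ∈ F, ¬ v.lt b c) then 1 else 0) + approvalScore 1 F V c := by
  have : ((F.filter fun b => v.lt b c).card < 1) ↔ (∀ b ∈ F, ¬ v.lt b c) := by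
    rw [Nat.lt_one_iff, Finset.card_eq_zero, Finset.filter_eq_empty_iff]
  simp only [approvalScore, List.map_cons, List.sum_cons]
  congr 1
  simp only [this]

lemma approvalScore_one_flatMap [DecidableEq Cand] (F : Finset Cand) {k : ℕ}
    (f : Fin k → List (LinearOrder Cand)) (c : Cand) :
    approvalScore 1 F ((List.finRange k).flatMap f) c
      = ∑ i : Fin k, approvalScore 1 F (f i) c := by
  rw [Fin.sum_univ_def]
  simp only [approvalScore, List.map_flatMap]
  rw [List.flatMap, List.sum_flatten, List.map_map]
  rfl

lemma approvalScore_one_map [DecidableEq Cand] (F : Finset Cand) {k : ℕ}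
    (f : Fin k → LinearOrder Cand) (c : Cand) :
    approvalScore 1 F ((List.finRange k).map f) c
      = ∑ j : Fin k, if (∀ b ∈ F, ¬ (f j).lt b c) then 1 else 0 := by
  have : ∀ j : Fin k, approvalScore 1 F [f j] c
      = if (∀ b ∈ F, ¬ (f j).lt b c) then 1 else 0 := by
    intro j; rw [approvalScore_one_cons, approvalScore_one_nil, add_zero]
  clear this
  rw [Fin.sum_univ_def]
  simp only [approvalScore, List.map_map]
  congr 1
  refine List.map_congr_left fun j _ => ?_
  simp only [Function.comp_apply]
  have h : ((F.filter fun b => (f j).lt b c).card < 1) ↔ (∀ b ∈ F, ¬ (f j).lt b c) := by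
    rw [Nat.lt_one_iff, Finset.card_eq_zero, Finset.filter_eq_empty_iff]
  simp only [h]

lemma mem_assignedTo [DecidableEq Cand] {k : ℕ} (A : Finset Cand)
    (g : {a // a ∈ A} → Fin k) (i : Fin k) (b : Cand) :
    b ∈ assignedTo A g i ↔ ∃ h : b ∈ A, g ⟨b, h⟩ = i := by
  constructor
  · intro h
    rcases Finset.mem_image.1 h with ⟨⟨x, hx⟩, hmem, rfl⟩
    exact ⟨hx, (Finset.mem_filter.1 hmem).2⟩
  · rintro ⟨h, hgi⟩
    exact Finset.mem_image.2 ⟨⟨b, h⟩, Finset.mem_filter.2 ⟨Finset.mem_attach _ _, hgi⟩, rfl⟩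

lemma clauseTop_inter_eq [LinearOrder Cand] {T B : Finset Cand} (e : Cand)
    (h : T ∩ B = T) (hne : T.Nonempty) : clauseTop T B e = T.min' hne := by
  have hne' : (T ∩ B).Nonempty := by rw [h]; exact hne
  rw [clauseTop_eq_min' e hne']
  have hsub : T ⊆ T ∩ B := by intro x hx; rw [h]; exact hx
  apply le_antisymm
  · exact Finset.min'_le _ _ (hsub (Finset.min'_mem T hne))
  · exact Finset.min'_le _ _ (Finset.inter_subset_left (Finset.min'_mem _ hne'))
lemma clauseBot_inter_eq [LinearOrder Cand] {T B : Finset Cand} (e : Cand)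
    (h : T ∩ B = T) (hne : T.Nonempty) : clauseBot T B e = T.max' hne := by
  have hne' : (T ∩ B).Nonempty := by rw [h]; exact hne
  rw [clauseBot_eq_max' e hne']
  have hsub : T ⊆ T ∩ B := by intro x hx; rw [h]; exact hx
  apply le_antisymm
  · exact Finset.le_max' _ _ (Finset.inter_subset_left (Finset.max'_mem _ hne'))
  · exact Finset.le_max' _ _ (hsub (Finset.max'_mem T hne))
lemma exists_middle [LinearOrder Cand] {T : Finset Cand} (h3 : T.card = 3) :
    ∃ y ∈ T, ∀ hne : T.Nonempty, y ≠ T.min' hne ∧ y ≠ T.max' hne := by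
  have hne : T.Nonempty := Finset.card_pos.1 (by rw [h3]; norm_num)
  have e1 : 2 ≤ (T.erase (T.min' hne)).card := by
    rw [Finset.card_erase_of_mem (Finset.min'_mem _ hne), h3]
  have e2 : 1 ≤ ((T.erase (T.min' hne)).erase (T.max' hne)).card := by
    calc (1 : ℕ) ≤ (T.erase (T.min' hne)).card - 1 := by omega
    _ ≤ _ := Finset.pred_card_le_card_erase
  obtain ⟨y, hy⟩ := Finset.card_pos.1 (by omega : 0 < ((T.erase (T.min' hne)).erase (T.max' hne)).card)
  have h1 := Finset.mem_erase.1 hy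
  have h2 := Finset.mem_erase.1 h1.2
  exact ⟨y, h2.2, fun hne' => ⟨h2.1, h1.1⟩⟩

/-- correctness of the E3-1/3-SAT⁺ reduction in Theorem 8: with variables
`A` (`|A| = n > 1`), clauses `S_1, …, S_m` (`m > 3`, each a 3-subset of `A`, each variable in
exactly three clauses), district `D_1` over fresh candidates `s_1, …, s_m` with, for each
`i`, one vote topped by `S_i` in ≺-increasing order followed by `s_i` and three votes topped
by `s_i`, and district `D_2` over fresh candidates `t_1, …, t_m` with, for each `i`, one vote
topped by `S_i` increasing then `t_i`, one topped by `S_i` decreasing then `t_i`, and three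
votes topped by `t_i`: there is an `X ⊆ A` with `|X ∩ S_i| = 1` for every `i` if and only if
`(A, D_1, D_2)` is a Yes-instance of 1-approval unbounded constructive recampaigning. -/
theorem one_in_three_sat_iff_one_approval_crc [LinearOrder Cand]
    (n m : ℕ) (hn : 1 < n) (hm : 3 < m)
    (A : Finset Cand) (hA : A.card = n)
    (S : Fin m → Finset Cand) (hSsub : ∀ i, S i ⊆ A) (hS3 : ∀ i, (S i).card = 3)
    (hocc : ∀ a ∈ A, (Finset.univ.filter fun i : Fin m => a ∈ S i).card = 3)
    (s t : Fin m → Cand) (hs : Function.Injective s) (ht : Function.Injective t)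
    (hsA : ∀ i, s i ∉ A) (htA : ∀ i, t i ∉ A)
    (u : Fin m → LinearOrder Cand) (w : Fin m → Fin 3 → LinearOrder Cand)
    (u' u'' : Fin m → LinearOrder Cand) (w' : Fin m → Fin 3 → LinearOrder Cand)
    (hu : ∀ i, IsTopSegment (u i) (Finset.univ.image s ∪ A)
      ((S i).sort (· ≤ ·) ++ [s i]))
    (hw : ∀ i j, IsTopSegment (w i j) (Finset.univ.image s ∪ A) [s i])
    (hu' : ∀ i, IsTopSegment (u' i) (Finset.univ.image t ∪ A)
      ((S i).sort (· ≤ ·) ++ [t i]))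
    (hu'' : ∀ i, IsTopSegment (u'' i) (Finset.univ.image t ∪ A)
      (((S i).sort (· ≤ ·)).reverse ++ [t i]))
    (hw' : ∀ i j, IsTopSegment (w' i j) (Finset.univ.image t ∪ A) [t i]) :
    (∃ X ⊆ A, ∀ i : Fin m, (X ∩ S i).card = 1) ↔
      YesCRC (fun F V => approvalWinners 1 F V)
        (![Finset.univ.image s, Finset.univ.image t] : Fin 2 → Finset Cand)
        (![(List.finRange m).flatMap (fun i => u i :: (List.finRange 3).map (w i)),
           (List.finRange m).flatMap
             (fun i => u' i :: u'' i :: (List.finRange 3).map (w' i))] :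
          Fin 2 → List (LinearOrder Cand))
        A := by
  set Cs : Finset Cand := Finset.univ.image s with hCsdef
  set Ct : Finset Cand := Finset.univ.image t with hCtdef
  set V1 : List (LinearOrder Cand) :=
    (List.finRange m).flatMap (fun i => u i :: (List.finRange 3).map (w i)) with hV1
  set V2 : List (LinearOrder Cand) :=
    (List.finRange m).flatMap (fun i => u' i :: u'' i :: (List.finRange 3).map (w' i)) with hV2
  have hCsA : ∀ x ∈ Cs, x ∉ A := by
    intro x hx
    rcases Finset.mem_image.1 hx with ⟨i, -, rfl⟩
    exact hsA i
  have hCtA : ∀ x ∈ Ct, x ∉ A := by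
    intro x hx
    rcases Finset.mem_image.1 hx with ⟨i, -, rfl⟩
    exact htA i
  have hsCs : ∀ i, s i ∈ Cs := fun i => Finset.mem_image_of_mem s (Finset.mem_univ i)
  have htCt : ∀ i, t i ∈ Ct := fun i => Finset.mem_image_of_mem t (Finset.mem_univ i)
  have hsum3 : ∀ a ∈ A, ∑ i : Fin m, (if a ∈ S i then (1 : ℕ) else 0) = 3 := by
    intro a ha
    rw [← Finset.card_filter]
    exact hocc a ha
  have hwinmem : ∀ (F : Finset Cand) (V : List (LinearOrder Cand)) (c : Cand),
      c ∈ approvalWinners 1 F V ↔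
        c ∈ F ∧ ∀ b ∈ F, approvalScore 1 F V b ≤ approvalScore 1 F V c := by
    intro F V c
    simp [approvalWinners]
  -- raw district-1 scores
  have score1 : ∀ B, B ⊆ A → ∀ c ∈ Cs ∪ B,
      approvalScore 1 (Cs ∪ B) V1 c
        = ∑ i : Fin m, ((if c = clauseTop (S i) B (s i) then (1 : ℕ) else 0)
            + 3 * (if c = s i then 1 else 0)) := by
    intro B hB c hc
    rw [hV1, approvalScore_one_flatMap]
    refine Finset.sum_congr rfl fun i _ => ?_
    rw [approvalScore_one_cons, approvalScore_one_map]
    congr 1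
    · exact ite_congr' (tops_sorted (hu i) hB (hSsub i) hCsA (hsCs i) hc)
    · trans (∑ _j : Fin 3, if c = s i then (1 : ℕ) else 0)
      · exact Finset.sum_congr rfl fun j _ =>
          ite_congr' (tops_single (hw i j) (Finset.union_subset_union_right hB)
            (Finset.mem_union_left _ (hsCs i)) hc)
      · rw [Finset.sum_const]
        simp [Finset.card_univ]
  -- raw district-2 scores
  have score2 : ∀ B, B ⊆ A → ∀ c ∈ Ct ∪ B,
      approvalScore 1 (Ct ∪ B) V2 c
        = ∑ i : Fin m, ((if c = clauseTop (S i) B (t i) then (1 : ℕ) else 0)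
            + ((if c = clauseBot (S i) B (t i) then 1 else 0)
              + 3 * (if c = t i then 1 else 0))) := by
    intro B hB c hc
    rw [hV2, approvalScore_one_flatMap]
    refine Finset.sum_congr rfl fun i _ => ?_
    rw [approvalScore_one_cons, approvalScore_one_cons, approvalScore_one_map]
    congr 1
    · exact ite_congr' (tops_sorted (hu' i) hB (hSsub i) hCtA (htCt i) hc)
    congr 1
    · exact ite_congr' (tops_rev (hu'' i) hB (hSsub i) hCtA (htCt i) hc)
    · trans (∑ _j : Fin 3, if c = t i then (1 : ℕ) else 0)
      · exact Finset.sum_congr rfl fun j _ =>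
          ite_congr' (tops_single (hw' i j) (Finset.union_subset_union_right hB)
            (Finset.mem_union_left _ (htCt i)) hc)
      · rw [Finset.sum_const]
        simp [Finset.card_univ]
  -- score of the fresh candidates in district 1
  have scoreS : ∀ B, B ⊆ A → ∀ j, approvalScore 1 (Cs ∪ B) V1 (s j)
      = 3 + (if (S j ∩ B).Nonempty then 0 else 1) := by
    intro B hB j
    rw [score1 B hB (s j) (Finset.mem_union_left _ (hsCs j))]
    have h1 : ∀ i : Fin m, (if s j = clauseTop (S i) B (s i) then (1 : ℕ) else 0)
        = if i = j then (if (S j ∩ B).Nonempty then 0 else 1) else 0 := by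
      intro i
      by_cases hne : (S i ∩ B).Nonempty
      · have hmem := clauseTop_mem (s i) hne
        have hne' : s j ≠ clauseTop (S i) B (s i) := by
          intro h
          apply hsA j
          rw [h]
          exact hB (Finset.mem_inter.1 hmem).2
        by_cases hij : i = j
        · subst hij; simp [hne', hne]
        · simp [hne', hij]
      · rw [clauseTop_of_empty (s i) hne]
        by_cases hij : i = j
        · subst hij; simp [hne]
        · have hji : s j ≠ s i := fun h => hij (hs h).symm
          simp [hji, hij]
    have h2 : ∀ i : Fin m, 3 * (if s j = s i then (1 : ℕ) else 0) = if i = j then 3 else 0 := by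
      intro i
      by_cases hij : i = j
      · subst hij; simp
      · have hji : s j ≠ s i := fun h => hij (hs h).symm
        simp [hji, hij]
    have hcomb : ∀ i : Fin m, ((if s j = clauseTop (S i) B (s i) then (1 : ℕ) else 0)
        + 3 * (if s j = s i then 1 else 0))
        = if i = j then ((if (S j ∩ B).Nonempty then 0 else 1) + 3) else 0 := by
      intro i
      rw [h1 i, h2 i]
      by_cases hij : i = j <;> simp [hij]
    rw [Finset.sum_congr rfl fun i _ => hcomb i,
      Finset.sum_ite_eq' Finset.univ j
        (fun _ => (if (S j ∩ B).Nonempty then 0 else 1) + 3),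
      if_pos (Finset.mem_univ j)]
    by_cases hne : (S j ∩ B).Nonempty <;> simp [hne]
  -- score of the fresh candidates in district 2
  have scoreT : ∀ B, B ⊆ A → ∀ j, approvalScore 1 (Ct ∪ B) V2 (t j)
      = 3 + (if (S j ∩ B).Nonempty then 0 else 2) := by
    intro B hB j
    rw [score2 B hB (t j) (Finset.mem_union_left _ (htCt j))]
    have h1 : ∀ i : Fin m, (if t j = clauseTop (S i) B (t i) then (1 : ℕ) else 0)
        = if i = j then (if (S j ∩ B).Nonempty then 0 else 1) else 0 := by
      intro i
      by_cases hne : (S i ∩ B).Nonempty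
      · have hmem := clauseTop_mem (t i) hne
        have hne' : t j ≠ clauseTop (S i) B (t i) := by
          intro h
          apply htA j
          rw [h]
          exact hB (Finset.mem_inter.1 hmem).2
        by_cases hij : i = j
        · subst hij; simp [hne', hne]
        · simp [hne', hij]
      · rw [clauseTop_of_empty (t i) hne]
        by_cases hij : i = j
        · subst hij; simp [hne]
        · have hji : t j ≠ t i := fun h => hij (ht h).symm
          simp [hji, hij]
    have h1' : ∀ i : Fin m, (if t j = clauseBot (S i) B (t i) then (1 : ℕ) else 0)
        = if i = j then (if (S j ∩ B).Nonempty then 0 else 1) else 0 := by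
      intro i
      by_cases hne : (S i ∩ B).Nonempty
      · have hmem := clauseBot_mem (t i) hne
        have hne' : t j ≠ clauseBot (S i) B (t i) := by
          intro h
          apply htA j
          rw [h]
          exact hB (Finset.mem_inter.1 hmem).2
        by_cases hij : i = j
        · subst hij; simp [hne', hne]
        · simp [hne', hij]
      · rw [clauseBot_of_empty (t i) hne]
        by_cases hij : i = j
        · subst hij; simp [hne]
        · have hji : t j ≠ t i := fun h => hij (ht h).symm
          simp [hji, hij]
    have h2 : ∀ i : Fin m, 3 * (if t j = t i then (1 : ℕ) else 0) = if i = j then 3 else 0 := by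
      intro i
      by_cases hij : i = j
      · subst hij; simp
      · have hji : t j ≠ t i := fun h => hij (ht h).symm
        simp [hji, hij]
    have hcomb : ∀ i : Fin m, ((if t j = clauseTop (S i) B (t i) then (1 : ℕ) else 0)
        + ((if t j = clauseBot (S i) B (t i) then 1 else 0) + 3 * (if t j = t i then 1 else 0)))
        = if i = j then ((if (S j ∩ B).Nonempty then 0 else 1)
            + ((if (S j ∩ B).Nonempty then 0 else 1) + 3)) else 0 := by
      intro i
      rw [h1 i, h1' i, h2 i]
      by_cases hij : i = j <;> simp [hij]
    rw [Finset.sum_congr rfl fun i _ => hcomb i,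
      Finset.sum_ite_eq' Finset.univ j
        (fun _ => (if (S j ∩ B).Nonempty then 0 else 1)
          + ((if (S j ∩ B).Nonempty then 0 else 1) + 3)),
      if_pos (Finset.mem_univ j)]
    by_cases hne : (S j ∩ B).Nonempty <;> simp [hne]
  -- score of assigned candidates in district 1
  have scoreB1 : ∀ B, B ⊆ A → ∀ a, a ∈ B → approvalScore 1 (Cs ∪ B) V1 a
      = ∑ i : Fin m, (if a = clauseTop (S i) B (s i) then (1 : ℕ) else 0) := by
    intro B hB a ha
    rw [score1 B hB a (Finset.mem_union_right _ ha)]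
    refine Finset.sum_congr rfl fun i _ => ?_
    have hns : a ≠ s i := fun h => hsA i (h ▸ hB ha)
    rw [if_neg hns, mul_zero, add_zero]
  have scoreB1_le : ∀ B, B ⊆ A → ∀ a, a ∈ B → approvalScore 1 (Cs ∪ B) V1 a ≤ 3 := by
    intro B hB a ha
    rw [scoreB1 B hB a ha, ← hsum3 a (hB ha)]
    refine Finset.sum_le_sum fun i _ => ?_
    by_cases h : a = clauseTop (S i) B (s i)
    · by_cases hne : (S i ∩ B).Nonempty
      · have haS : a ∈ S i := by
          rw [h]
          exact (Finset.mem_inter.1 (clauseTop_mem (s i) hne)).1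
        rw [if_pos h, if_pos haS]
      · exfalso
        rw [clauseTop_of_empty (s i) hne] at h
        exact hsA i (h ▸ hB ha)
    · rw [if_neg h]
      exact Nat.zero_le _
  -- score of assigned candidates in district 2
  have scoreB2 : ∀ B, B ⊆ A → ∀ a, a ∈ B → approvalScore 1 (Ct ∪ B) V2 a
      = ∑ i : Fin m, ((if a = clauseTop (S i) B (t i) then (1 : ℕ) else 0)
          + (if a = clauseBot (S i) B (t i) then 1 else 0)) := by
    intro B hB a ha
    rw [score2 B hB a (Finset.mem_union_right _ ha)]
    refine Finset.sum_congr rfl fun i _ => ?_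
    have hnt : a ≠ t i := fun h => htA i (h ▸ hB ha)
    rw [if_neg hnt, mul_zero, add_zero]
  constructor
  · -- forward direction
    rintro ⟨X, hXA, hX1⟩
    have hX1' : ∀ i, (S i ∩ X).card = 1 := fun i => by
      rw [Finset.inter_comm]; exact hX1 i
    have hXne : ∀ i, (S i ∩ X).Nonempty := fun i =>
      Finset.card_pos.1 (by rw [hX1' i]; norm_num)
    refine ⟨fun a => if (a : Cand) ∈ X then 0 else 1, ?_⟩
    have hA0 : assignedTo A (fun a => if (a : Cand) ∈ X then (0 : Fin 2) else 1) 0 = X := by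
      ext b
      rw [mem_assignedTo]
      constructor
      · rintro ⟨h, hgb⟩
        by_contra hbX
        rw [if_neg hbX] at hgb
        exact absurd hgb (by decide)
      · intro hbX
        exact ⟨hXA hbX, if_pos hbX⟩
    have hA1 : assignedTo A (fun a => if (a : Cand) ∈ X then (0 : Fin 2) else 1) 1 = A \ X := by
      ext b
      rw [mem_assignedTo, Finset.mem_sdiff]
      constructor
      · rintro ⟨h, hgb⟩
        refine ⟨h, fun hbX => ?_⟩
        rw [if_pos hbX] at hgb
        exact absurd hgb (by decide)
      · rintro ⟨h1, h2⟩
        exact ⟨h1, if_neg h2⟩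
    intro a
    by_cases haX : (a : Cand) ∈ X
    · have hga : (if (a : Cand) ∈ X then (0 : Fin 2) else 1) = 0 := if_pos haX
      simp only [hga, Matrix.cons_val_zero, hA0]
      rw [hwinmem]
      have hsa : approvalScore 1 (Cs ∪ X) V1 (a : Cand) = 3 := by
        rw [scoreB1 X hXA (a : Cand) haX]
        have hterm : ∀ i : Fin m, (if (a : Cand) = clauseTop (S i) X (s i) then (1 : ℕ) else 0)
            = if (a : Cand) ∈ S i then 1 else 0 := by
          intro i
          by_cases haS : (a : Cand) ∈ S i
          · have hsing : S i ∩ X = {(a : Cand)} := by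
              rcases Finset.card_eq_one.1 (hX1' i) with ⟨x, hx⟩
              have hmem : (a : Cand) ∈ S i ∩ X := Finset.mem_inter.2 ⟨haS, haX⟩
              rw [hx] at hmem ⊢
              rw [Finset.mem_singleton] at hmem
              rw [hmem]
            have htop : clauseTop (S i) X (s i) = (a : Cand) := by
              rw [clauseTop_eq_min' (s i) (hXne i)]
              exact Finset.mem_singleton.1 (Finset.subset_of_eq hsing (Finset.min'_mem _ (hXne i)))
            simp [htop, haS]
          · have hne : (a : Cand) ≠ clauseTop (S i) X (s i) := by
              intro h
              apply haS
              rw [h]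
              exact (Finset.mem_inter.1 (clauseTop_mem (s i) (hXne i))).1
            simp [hne, haS]
        rw [Finset.sum_congr rfl fun i _ => hterm i, hsum3 _ (hXA haX)]
      refine ⟨Finset.mem_union_right _ haX, ?_⟩
      intro b hb
      rw [hsa]
      rcases Finset.mem_union.1 hb with hbs | hbX
      · rcases Finset.mem_image.1 hbs with ⟨j, -, rfl⟩
        rw [scoreS X hXA j, if_pos (hXne j)]
      · exact scoreB1_le X hXA b hbX
    · have haA : (a : Cand) ∈ A := a.2
      have hga : (if (a : Cand) ∈ X then (0 : Fin 2) else 1) = 1 := if_neg haX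
      simp only [hga, Matrix.cons_val_one, Matrix.head_cons, Matrix.cons_val_fin_one, hA1]
      rw [hwinmem]
      have hBA : A \ X ⊆ A := Finset.sdiff_subset
      have hSB : ∀ i, S i ∩ (A \ X) = S i \ X := by
        intro i
        ext x
        simp only [Finset.mem_inter, Finset.mem_sdiff]
        exact ⟨fun h => ⟨h.1, h.2.2⟩, fun h => ⟨h.1, hSsub i h.1, h.2⟩⟩
      have hcard2 : ∀ i, (S i ∩ (A \ X)).card = 2 := by
        intro i
        rw [hSB i]
        have h1 := Finset.card_sdiff_add_card_inter (S i) X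
        rw [hX1' i, hS3 i] at h1
        omega
      have hne2 : ∀ i, (S i ∩ (A \ X)).Nonempty :=
        fun i => Finset.card_pos.1 (by rw [hcard2 i]; norm_num)
      have hminmax : ∀ i, (S i ∩ (A \ X)).min' (hne2 i) ≠ (S i ∩ (A \ X)).max' (hne2 i) :=
        fun i => ne_of_lt (Finset.min'_lt_max'_of_card _ (by rw [hcard2 i]; norm_num))
      have hscB : ∀ b, b ∈ A \ X → approvalScore 1 (Ct ∪ (A \ X)) V2 b = 3 := by
        intro b hbB
        rw [scoreB2 (A \ X) hBA b hbB]
        have hterm : ∀ i : Fin m,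
            ((if b = clauseTop (S i) (A \ X) (t i) then (1 : ℕ) else 0)
              + (if b = clauseBot (S i) (A \ X) (t i) then 1 else 0))
            = if b ∈ S i then 1 else 0 := by
          intro i
          rw [clauseTop_eq_min' (t i) (hne2 i), clauseBot_eq_max' (t i) (hne2 i)]
          by_cases hbS : b ∈ S i
          · have hbmem : b ∈ S i ∩ (A \ X) := Finset.mem_inter.2 ⟨hbS, hbB⟩
            have hsub2 : ({(S i ∩ (A \ X)).min' (hne2 i), (S i ∩ (A \ X)).max' (hne2 i)} :
                Finset Cand) = S i ∩ (A \ X) := by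
              apply Finset.eq_of_subset_of_card_le
              · intro x hx
                rcases Finset.mem_insert.1 hx with hx' | hx'
                · rw [hx']; exact Finset.min'_mem _ (hne2 i)
                · rw [Finset.mem_singleton.1 hx']; exact Finset.max'_mem _ (hne2 i)
              · rw [hcard2 i, Finset.card_insert_of_notMem
                  (fun h => hminmax i (Finset.mem_singleton.1 h)), Finset.card_singleton]
            rcases Finset.mem_insert.1 (Finset.subset_of_eq hsub2.symm hbmem) with hb1 | hb1
            · rw [if_pos hb1, if_neg (fun h => hminmax i (hb1.symm.trans h)), if_pos hbS]
            · rw [Finset.mem_singleton] at hb1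
              rw [if_neg (fun h => hminmax i (h.symm.trans hb1)), if_pos hb1, if_pos hbS]
          · have hb1 : b ≠ (S i ∩ (A \ X)).min' (hne2 i) := by
              intro h
              apply hbS
              rw [h]
              exact (Finset.mem_inter.1 (Finset.min'_mem _ (hne2 i))).1
            have hb2 : b ≠ (S i ∩ (A \ X)).max' (hne2 i) := by
              intro h
              apply hbS
              rw [h]
              exact (Finset.mem_inter.1 (Finset.max'_mem _ (hne2 i))).1
            rw [if_neg hb1, if_neg hb2, if_neg hbS]
        rw [Finset.sum_congr rfl fun i _ => hterm i, hsum3 b (hBA hbB)]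
      refine ⟨Finset.mem_union_right _ (Finset.mem_sdiff.2 ⟨haA, haX⟩), ?_⟩
      intro b hb
      rw [hscB (a : Cand) (Finset.mem_sdiff.2 ⟨haA, haX⟩)]
      rcases Finset.mem_union.1 hb with hbt | hbB
      · rcases Finset.mem_image.1 hbt with ⟨j, -, rfl⟩
        rw [scoreT (A \ X) hBA j, if_pos (hne2 j)]
      · rw [hscB b hbB]
  · -- backward direction
    rintro ⟨g, hg⟩
    have h2cases : ∀ v : Fin 2, v = 0 ∨ v = 1 := by decide
    have hXA : assignedTo A g 0 ⊆ A := by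
      intro b hb
      rcases (mem_assignedTo A g 0 b).1 hb with ⟨h, -⟩
      exact h
    refine ⟨assignedTo A g 0, hXA, ?_⟩
    have hwin1 : ∀ (b : Cand) (hb : b ∈ A), g ⟨b, hb⟩ = 0 →
        (b ∈ Cs ∪ assignedTo A g 0 ∧ ∀ c ∈ Cs ∪ assignedTo A g 0,
          approvalScore 1 (Cs ∪ assignedTo A g 0) V1 c
            ≤ approvalScore 1 (Cs ∪ assignedTo A g 0) V1 b) := by
      intro b hb h0
      have hh := hg ⟨b, hb⟩
      rw [h0] at hh
      simp only [Matrix.cons_val_zero] at hh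
      rw [hwinmem] at hh
      exact hh
    have hwin2 : ∀ (b : Cand) (hb : b ∈ A), g ⟨b, hb⟩ = 1 →
        (b ∈ Ct ∪ assignedTo A g 1 ∧ ∀ c ∈ Ct ∪ assignedTo A g 1,
          approvalScore 1 (Ct ∪ assignedTo A g 1) V2 c
            ≤ approvalScore 1 (Ct ∪ assignedTo A g 1) V2 b) := by
      intro b hb h1
      have hh := hg ⟨b, hb⟩
      rw [h1] at hh
      simp only [Matrix.cons_val_one, Matrix.head_cons, Matrix.cons_val_fin_one] at hh
      rw [hwinmem] at hh
      exact hh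
    -- Step 1: some variable is assigned to district 1
    have hXnon : (assignedTo A g 0).Nonempty := by
      by_contra hX
      rw [Finset.not_nonempty_iff_eq_empty] at hX
      have hA1 : assignedTo A g 1 = A := by
        ext b
        constructor
        · intro hb
          rcases (mem_assignedTo A g 1 b).1 hb with ⟨h, -⟩
          exact h
        · intro hb
          rcases h2cases (g ⟨b, hb⟩) with h0 | h1
          · exfalso
            have hbX : b ∈ assignedTo A g 0 := (mem_assignedTo A g 0 b).2 ⟨hb, h0⟩
            rw [hX] at hbX
            exact absurd hbX (Finset.notMem_empty b)
          · exact (mem_assignedTo A g 1 b).2 ⟨hb, h1⟩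
      have hm0 : (0 : ℕ) < m := by omega
      have hSA : ∀ i : Fin m, S i ∩ A = S i := fun i => Finset.inter_eq_left.2 (hSsub i)
      have hneS : ∀ i : Fin m, (S i).Nonempty := fun i =>
        Finset.card_pos.1 (by rw [hS3 i]; norm_num)
      have hneA : ∀ i : Fin m, (S i ∩ A).Nonempty := fun i => by
        rw [hSA i]; exact hneS i
      have hctop : ∀ i : Fin m, clauseTop (S i) A (t i) = (S i).min' (hneS i) :=
        fun i => clauseTop_inter_eq (t i) (hSA i) (hneS i)
      have hcbot : ∀ i : Fin m, clauseBot (S i) A (t i) = (S i).max' (hneS i) :=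
        fun i => clauseBot_inter_eq (t i) (hSA i) (hneS i)
      have hmmS : ∀ i : Fin m, (S i).min' (hneS i) ≠ (S i).max' (hneS i) :=
        fun i => ne_of_lt (Finset.min'_lt_max'_of_card _ (by rw [hS3 i]; norm_num))
      set i₀ : Fin m := ⟨0, hm0⟩
      obtain ⟨y, hyS, hymid⟩ := exists_middle (T := S i₀) (by rw [hS3 i₀])
      obtain ⟨hymin, hymax⟩ := hymid (hneS i₀)
      have hyA : y ∈ A := hSsub i₀ hyS
      have hgy : g ⟨y, hyA⟩ = 1 := by
        rcases h2cases (g ⟨y, hyA⟩) with h0 | h1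
        · exfalso
          have hbX : y ∈ assignedTo A g 0 := (mem_assignedTo A g 0 y).2 ⟨hyA, h0⟩
          rw [hX] at hbX
          exact absurd hbX (Finset.notMem_empty y)
        · exact h1
      have hw2 := hwin2 y hyA hgy
      rw [hA1] at hw2
      have hle := hw2.2 (t i₀) (Finset.mem_union_left _ (htCt i₀))
      rw [scoreT A Finset.Subset.rfl i₀, if_pos (hneA i₀),
        scoreB2 A Finset.Subset.rfl y hyA] at hle
      have hlt : (∑ i : Fin m, ((if y = clauseTop (S i) A (t i) then (1 : ℕ) else 0)
          + (if y = clauseBot (S i) A (t i) then 1 else 0)))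
          < ∑ i : Fin m, (if y ∈ S i then (1 : ℕ) else 0) := by
        refine Finset.sum_lt_sum ?_ ⟨i₀, Finset.mem_univ i₀, ?_⟩
        · intro i _
          by_cases h1 : y = clauseTop (S i) A (t i)
          · have hyS' : y ∈ S i := by
              rw [h1, hctop i]
              exact Finset.min'_mem _ (hneS i)
            have h2 : y ≠ clauseBot (S i) A (t i) := by
              intro h2
              apply hmmS i
              rw [hctop i] at h1
              rw [hcbot i] at h2
              rw [← h1, ← h2]
            rw [if_pos h1, if_neg h2, if_pos hyS']
          · rw [if_neg h1]
            by_cases h2 : y = clauseBot (S i) A (t i)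
            · have hyS' : y ∈ S i := by
                rw [h2, hcbot i]
                exact Finset.max'_mem _ (hneS i)
              rw [if_pos h2, if_pos hyS']
            · rw [if_neg h2]
              exact Nat.zero_le _
        · rw [hctop i₀, hcbot i₀, if_neg hymin, if_neg hymax, if_pos hyS]
          norm_num
      rw [hsum3 y hyA] at hlt
      omega
    -- Step 2: every clause meets the district-1 set
    obtain ⟨a₀, ha₀⟩ := hXnon
    have ha₀A : a₀ ∈ A := hXA ha₀
    have hga₀ : g ⟨a₀, ha₀A⟩ = 0 := by
      rcases (mem_assignedTo A g 0 a₀).1 ha₀ with ⟨h, hh⟩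
      exact hh
    have hnei : ∀ i : Fin m, (S i ∩ assignedTo A g 0).Nonempty := by
      intro i
      by_contra hne
      have hw1 := hwin1 a₀ ha₀A hga₀
      have hle := hw1.2 (s i) (Finset.mem_union_left _ (hsCs i))
      rw [scoreS (assignedTo A g 0) hXA i, if_neg hne] at hle
      have hle2 := scoreB1_le (assignedTo A g 0) hXA a₀ ha₀
      omega
    -- Step 3: each clause meets it in exactly one variable
    intro i
    rw [Finset.inter_comm]
    by_contra hc1
    have h2le : 2 ≤ (S i ∩ assignedTo A g 0).card := by
      have hp := Finset.card_pos.2 (hnei i)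
      omega
    have hmxmem := Finset.max'_mem (S i ∩ assignedTo A g 0) (hnei i)
    have hmxS : (S i ∩ assignedTo A g 0).max' (hnei i) ∈ S i := (Finset.mem_inter.1 hmxmem).1
    have hmxX : (S i ∩ assignedTo A g 0).max' (hnei i) ∈ assignedTo A g 0 :=
      (Finset.mem_inter.1 hmxmem).2
    have hminlt : (S i ∩ assignedTo A g 0).min' (hnei i)
        < (S i ∩ assignedTo A g 0).max' (hnei i) :=
      Finset.min'_lt_max'_of_card _ (by omega)
    have hmxA : (S i ∩ assignedTo A g 0).max' (hnei i) ∈ A := hXA hmxX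
    have hgmx : g ⟨(S i ∩ assignedTo A g 0).max' (hnei i), hmxA⟩ = 0 := by
      rcases (mem_assignedTo A g 0 _).1 hmxX with ⟨h, hh⟩
      exact hh
    have hw1 := hwin1 _ hmxA hgmx
    have hle := hw1.2 (s i) (Finset.mem_union_left _ (hsCs i))
    rw [scoreS (assignedTo A g 0) hXA i, if_pos (hnei i),
      scoreB1 (assignedTo A g 0) hXA _ hmxX] at hle
    have hlt : (∑ j : Fin m, (if (S i ∩ assignedTo A g 0).max' (hnei i)
          = clauseTop (S j) (assignedTo A g 0) (s j) then (1 : ℕ) else 0))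
        < ∑ j : Fin m, (if (S i ∩ assignedTo A g 0).max' (hnei i) ∈ S j then (1 : ℕ) else 0) := by
      refine Finset.sum_lt_sum ?_ ⟨i, Finset.mem_univ i, ?_⟩
      · intro j _
        by_cases h1 : (S i ∩ assignedTo A g 0).max' (hnei i)
            = clauseTop (S j) (assignedTo A g 0) (s j)
        · have hmem : (S i ∩ assignedTo A g 0).max' (hnei i) ∈ S j := by
            rw [h1]
            exact (Finset.mem_inter.1 (clauseTop_mem (s j) (hnei j))).1
          rw [if_pos h1, if_pos hmem]
        · rw [if_neg h1]
          exact Nat.zero_le _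
      · rw [clauseTop_eq_min' (s i) (hnei i), if_neg (fun h => absurd hminlt (by rw [← h]; exact lt_irrefl _)), if_pos hmxS]
        norm_num
    rw [hsum3 _ hmxA] at hlt
    omega

end
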